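/- Let 𝔽q, F, v, R, Λ and the generators λ1 < … < λm be as in the context (the abstract core of the paper's main theorem). If φ1, …, φn : R → 𝔽q are pairwise distinct 𝔽q-algebra homomorphisms, then n ≤ #(Λ \ ∪_{i=1}^{m} (q·λi + Λ)). (In the function-field situation this says: a function field over 𝔽q possessing a rational place whose Weierstrass semigroup is Λ = ⟨λ1, …, λm⟩ has at most #(Λ \ ∪_{i=1}^{m}(q·λi + Λ)) + 1 rational places.) -/

import Mathlib

/-- Abstract core of the paper's main theorem (Theorem 1, bound (2)).
Let `Fq` be a finite field with `q` elements, `F ⊇ Fq` a field, `v` a discrete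
valuation on `F` with `v` trivial on `Fq ∖ {0}` and residue field `Fq`, and `R`
an `Fq`-subalgebra of `F` whose nonzero elements have `v ≤ 0`.  Let
`Λ = {-v f : f ∈ R, f ≠ 0}` have finitely many gaps and be generated by the
positive integers `λ 0 < … < λ (m-1)`.  If `φ 1, …, φ n : R → Fq` are pairwise
distinct `Fq`-algebra homomorphisms, then
`n ≤ #(Λ \ ⋃ i, (q·λ i + Λ))`. -/
theorem rational_places_bound
    {Fq : Type*} [Field Fq] [Fintype Fq]
    {F : Type*} [Field F] [Algebra Fq F]
    (q : ℕ) (hq : q = Fintype.card Fq)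
    (v : F → WithTop ℤ)
    (hv_mul : ∀ f g : F, v (f * g) = v f + v g)
    (hv_add : ∀ f g : F, min (v f) (v g) ≤ v (f + g))
    (hv_top : ∀ f : F, v f = ⊤ ↔ f = 0)
    (hv_const : ∀ c : Fq, c ≠ 0 → v (algebraMap Fq F c) = 0)
    (hv_res : ∀ f : F, 0 ≤ v f → ∃ c : Fq, 0 < v (f - algebraMap Fq F c))
    (R : Subalgebra Fq F)
    (hR : ∀ f ∈ R, f ≠ 0 → v f ≤ 0)
    (Λ : Set ℕ)
    (hΛ : Λ = {n : ℕ | ∃ f ∈ R, f ≠ 0 ∧ v f = ((-(n : ℤ) : ℤ) : WithTop ℤ)})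
    (hgaps : (Λᶜ : Set ℕ).Finite)
    (m : ℕ) (lam : Fin m → ℕ)
    (hlam_pos : ∀ i, 0 < lam i)
    (hlam_mono : StrictMono lam)
    (hgen : Λ = {n : ℕ | ∃ a : Fin m → ℕ, n = ∑ i, a i * lam i})
    (n : ℕ) (φ : Fin n → (R →ₐ[Fq] Fq))
    (hφ : Function.Injective φ) :
    n ≤ (Λ \ ⋃ i : Fin m, (fun x => q * lam i + x) '' Λ).ncard := by
  classical
  have hΛ' : ∀ s : ℕ, s ∈ Λ ↔ ∃ f ∈ R, f ≠ 0 ∧ v f = ((-(s : ℤ) : ℤ) : WithTop ℤ) :=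
    fun s => by rw [hΛ]; exact Iff.rfl
  have hgen' : ∀ s : ℕ, s ∈ Λ ↔ ∃ a : Fin m → ℕ, s = ∑ i, a i * lam i :=
    fun s => by rw [hgen]; exact Iff.rfl
  have hq2 : 2 ≤ q := by rw [hq]; exact Fintype.one_lt_card
  -- basic valuation facts
  have hv1 : v 1 = 0 := by
    have h := hv_const 1 one_ne_zero
    rwa [map_one] at h
  have hvneg : ∀ f : F, v (-f) = v f := by
    intro f
    have h1 : v (algebraMap Fq F (-1)) = 0 := hv_const (-1) (neg_ne_zero.mpr one_ne_zero)
    rw [map_neg, map_one] at h1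
    have : (-f) = (-1 : F) * f := by ring
    rw [this, hv_mul, h1, zero_add]
  have hvlt : ∀ f g : F, v f < v g → v (f + g) = v f := by
    intro f g hfg
    have hge : v f ≤ v (f + g) := le_trans (by rw [min_eq_left hfg.le]) (hv_add f g)
    refine le_antisymm ?_ hge
    have h3 : min (v (f + g)) (v g) ≤ v f := by
      have h := hv_add (f + g) (-g)
      rw [hvneg, add_neg_cancel_right] at h
      exact h
    rcases min_le_iff.mp h3 with h | h
    · exact h
    · exact absurd h (not_le.mpr hfg)
  have hvpow : ∀ (f : F) (z : ℤ), v f = (z : WithTop ℤ) →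
      ∀ N : ℕ, v (f ^ N) = (((N : ℤ) * z : ℤ) : WithTop ℤ) := by
    intro f z hf N
    induction N with
    | zero => simpa using hv1
    | succ N ih =>
      rw [pow_succ, hv_mul, ih, hf, ← WithTop.coe_add]
      congr 1
      push_cast
      ring
  have hvB : ∀ f g : F, g ≠ 0 → v f = v g →
      ∃ c : Fq, v f < v (f - algebraMap Fq F c * g) := by
    intro f g hg0 hfg
    obtain ⟨z, hz⟩ := WithTop.ne_top_iff_exists.mp ((hv_top g).not.mpr hg0)
    have hvinv : v (f * g⁻¹) = 0 := by
      have hmul := hv_mul (f * g⁻¹) g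
      rw [mul_assoc, inv_mul_cancel₀ hg0, mul_one] at hmul
      have h2 : v (f * g⁻¹) + (z : WithTop ℤ) = 0 + (z : WithTop ℤ) := by
        rw [zero_add, hz, ← hmul, hfg]
      exact WithTop.add_right_cancel WithTop.coe_ne_top h2
    obtain ⟨c, hc⟩ := hv_res (f * g⁻¹) (le_of_eq hvinv.symm)
    refine ⟨c, ?_⟩
    have key : f - algebraMap Fq F c * g = (f * g⁻¹ - algebraMap Fq F c) * g := by
      rw [sub_mul, mul_assoc, inv_mul_cancel₀ hg0, mul_one]
    rw [key, hv_mul, hfg, ← hz]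
    have h4 := WithTop.add_lt_add_right (WithTop.coe_ne_top (a := z)) hc
    rwa [zero_add] at h4
  -- pole orders
  have hpole : ∀ x : ↥R, (x : F) ≠ 0 →
      ∃ d : ℕ, v (x : F) = ((-(d : ℤ) : ℤ) : WithTop ℤ) ∧ d ∈ Λ := by
    intro x hx
    obtain ⟨z, hz⟩ := WithTop.ne_top_iff_exists.mp ((hv_top _).not.mpr hx)
    have hle : v (x : F) ≤ 0 := hR x x.2 hx
    have hz0 : z ≤ 0 := by
      rw [← hz] at hle
      exact_mod_cast hle
    have hzz : v (x : F) = ((-(((-z).toNat : ℤ)) : ℤ) : WithTop ℤ) := by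
      rw [← hz]
      exact_mod_cast congrArg (fun t : ℤ => (t : WithTop ℤ)) (by omega : z = -(((-z).toNat : ℤ)))
    exact ⟨(-z).toNat, hzz, (hΛ' _).mpr ⟨x, x.2, hx, hzz⟩⟩
  -- choice of representatives
  have hrep : ∀ d : ℕ, ∃ x : ↥R, d ∈ Λ →
      ((x : F) ≠ 0 ∧ v (x : F) = ((-(d : ℤ) : ℤ) : WithTop ℤ)) := by
    intro d
    by_cases hd : d ∈ Λ
    · obtain ⟨f, hfR, hf0, hfv⟩ := (hΛ' d).mp hd
      exact ⟨⟨f, hfR⟩, fun _ => ⟨hf0, hfv⟩⟩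
    · exact ⟨0, fun h => absurd h hd⟩
  choose g hg using hrep
  -- evaluation map
  let ev : ↥R →ₗ[Fq] (Fin n → Fq) := LinearMap.pi fun j => (φ j).toLinearMap
  have hev : ∀ (x : ↥R) (j : Fin n), ev x j = φ j x := fun x j => rfl
  set U : Set ℕ := ⋃ i : Fin m, (fun x => q * lam i + x) '' Λ with hU
  -- Λ is infinite, so m ≥ 1
  have hΛinf : Λ.Infinite := by
    intro hfin
    have : (Set.univ : Set ℕ).Finite := by
      rw [← Set.union_compl_self Λ]
      exact hfin.union hgaps
    exact Set.infinite_univ this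
  have hm : 0 < m := by
    rcases Nat.eq_zero_or_pos m with h0 | h
    · exfalso
      apply hΛinf
      apply Set.Finite.subset (Set.finite_singleton 0)
      intro s hs
      obtain ⟨a, ha⟩ := (hgen' s).mp hs
      subst h0
      simpa using ha
    · exact h
  obtain ⟨N₀, hN₀⟩ : ∃ N₀ : ℕ, ∀ k, N₀ ≤ k → k ∈ Λ := by
    refine ⟨(hgaps.toFinset.sup id) + 1, fun k hk => ?_⟩
    by_contra hkΛ
    have h1 : k ∈ hgaps.toFinset := hgaps.mem_toFinset.mpr hkΛ
    have h2 := Finset.le_sup (f := id) h1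
    simp only [id] at h2
    omega
  set i0 : Fin m := ⟨0, hm⟩ with hi0
  have hDfin : (Λ \ U).Finite := by
    apply Set.Finite.subset (Set.finite_Iio (N₀ + q * lam i0))
    intro k hk
    simp only [Set.mem_Iio]
    by_contra hc
    push_neg at hc
    apply hk.2
    refine Set.mem_iUnion.mpr ⟨i0, ⟨k - q * lam i0, hN₀ _ (by omega), show q * lam i0 + (k - q * lam i0) = k by omega⟩⟩
  set T : Finset (Fin n → Fq) := hDfin.toFinset.image (fun d => ev (g d)) with hT
  set W : Submodule Fq (Fin n → Fq) := Submodule.span Fq (T : Set (Fin n → Fq)) with hW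
  have hmemW : ∀ d ∈ Λ \ U, ev (g d) ∈ W := fun d hd =>
    Submodule.subset_span (Finset.mem_coe.mpr
      (Finset.mem_image_of_mem _ (hDfin.mem_toFinset.mpr hd)))
  have hlamΛ : ∀ i : Fin m, lam i ∈ Λ := by
    intro i
    refine (hgen' _).mpr ⟨Pi.single i 1, ?_⟩
    simp [Pi.single_apply]
  -- kernel elements
  have hker : ∀ i : Fin m, ∀ μ ∈ Λ, ∃ k : ↥R, ev k = 0 ∧ (k : F) ≠ 0 ∧
      v (k : F) = ((-((q * lam i + μ : ℕ) : ℤ) : ℤ) : WithTop ℤ) := by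
    intro i μ hμ
    obtain ⟨hfi0, hfiv⟩ := hg (lam i) (hlamΛ i)
    obtain ⟨hgm0, hgmv⟩ := hg μ hμ
    refine ⟨(g (lam i) ^ q - g (lam i)) * g μ, ?_, ?_, ?_⟩
    · funext j
      rw [hev, map_mul, map_sub, map_pow]
      have hp : (φ j (g (lam i))) ^ q = φ j (g (lam i)) := by
        rw [hq]; exact FiniteField.pow_card _
      rw [hp, sub_self, zero_mul]
      rfl
    · intro h0
      have hco : ((((g (lam i) ^ q - g (lam i)) * g μ : ↥R)) : F)
          = (((g (lam i) : F)) ^ q - (g (lam i) : F)) * (g μ : F) := by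
        push_cast
        ring
      rw [hco] at h0
      have hvk : v ((((g (lam i) : F)) ^ q - (g (lam i) : F)) * (g μ : F)) = ⊤ :=
        (hv_top _).mpr h0
      have h1 : v ((g (lam i) : F) ^ q) = (((q : ℤ) * (-(lam i : ℤ)) : ℤ) : WithTop ℤ) :=
        hvpow _ _ hfiv q
      have hlt : v ((g (lam i) : F) ^ q) < v (-(g (lam i) : F)) := by
        rw [h1, hvneg, hfiv]
        have := hlam_pos i
        exact_mod_cast (by nlinarith : ((q : ℤ)) * (-(lam i : ℤ)) < -(lam i : ℤ))
      have h2 : v ((g (lam i) : F) ^ q - (g (lam i) : F))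
          = (((q : ℤ) * (-(lam i : ℤ)) : ℤ) : WithTop ℤ) := by
        rw [sub_eq_add_neg, hvlt _ _ hlt, h1]
      rw [hv_mul, h2, hgmv, ← WithTop.coe_add] at hvk
      exact WithTop.coe_ne_top hvk
    · have hco : ((((g (lam i) ^ q - g (lam i)) * g μ : ↥R)) : F)
          = (((g (lam i) : F)) ^ q - (g (lam i) : F)) * (g μ : F) := by
        push_cast
        ring
      rw [hco]
      have h1 : v ((g (lam i) : F) ^ q) = (((q : ℤ) * (-(lam i : ℤ)) : ℤ) : WithTop ℤ) :=
        hvpow _ _ hfiv q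
      have hlt : v ((g (lam i) : F) ^ q) < v (-(g (lam i) : F)) := by
        rw [h1, hvneg, hfiv]
        have := hlam_pos i
        exact_mod_cast (by nlinarith : ((q : ℤ)) * (-(lam i : ℤ)) < -(lam i : ℤ))
      have h2 : v ((g (lam i) : F) ^ q - (g (lam i) : F))
          = (((q : ℤ) * (-(lam i : ℤ)) : ℤ) : WithTop ℤ) := by
        rw [sub_eq_add_neg, hvlt _ _ hlt, h1]
      rw [hv_mul, h2, hgmv, ← WithTop.coe_add]
      congr 1
      push_cast
      ring
  -- main induction
  have main : ∀ N : ℕ, ∀ x : ↥R, ((-(N : ℤ) : ℤ) : WithTop ℤ) ≤ v (x : F) → ev x ∈ W := by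
    intro N
    induction N using Nat.strong_induction_on with
    | _ N IH =>
      intro x hx
      by_cases hx0 : (x : F) = 0
      · rw [ZeroMemClass.coe_eq_zero.mp hx0, map_zero]
        exact W.zero_mem
      · obtain ⟨d, hdv, hdΛ⟩ := hpole x hx0
        have hdN : d ≤ N := by
          rw [hdv] at hx
          have := WithTop.coe_le_coe.mp hx
          omega
        by_cases hdU : d ∈ U
        · -- kernel case
          rw [hU, Set.mem_iUnion] at hdU
          obtain ⟨i, μ, hμΛ, hsum⟩ := hdU
          obtain ⟨k, hkev, hk0, hkv⟩ := hker i μ hμΛ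
          have hvx : v (x : F) = v (k : F) := by rw [hdv, hkv, show q * lam i + μ = d from hsum]
          obtain ⟨c, hc⟩ := hvB (x : F) (k : F) hk0 hvx
          set y : ↥R := x - c • k with hy
          have hyc : (y : F) = (x : F) - algebraMap Fq F c * (k : F) := by
            rw [hy]
            push_cast
            rw [Algebra.smul_def]
          have hevy : ev y = ev x := by
            rw [hy, map_sub, map_smul, hkev, smul_zero, sub_zero]
          rw [← hyc] at hc
          by_cases hy0 : (y : F) = 0
          · rw [← hevy, ZeroMemClass.coe_eq_zero.mp hy0, map_zero]
            exact W.zero_mem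
          · obtain ⟨d', hd'v, _⟩ := hpole y hy0
            have hdd : d' < d := by
              rw [hdv, hd'v] at hc
              have := WithTop.coe_lt_coe.mp hc
              omega
            have := IH d' (lt_of_lt_of_le hdd hdN) y hd'v.ge
            rwa [hevy] at this
        · -- spanning case
          have hdD : d ∈ Λ \ U := ⟨hdΛ, hdU⟩
          obtain ⟨hgd0, hgdv⟩ := hg d hdΛ
          have hvx : v (x : F) = v ((g d : F)) := by rw [hdv, hgdv]
          obtain ⟨c, hc⟩ := hvB (x : F) ((g d : F)) hgd0 hvx
          set y : ↥R := x - c • g d with hy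
          have hyc : (y : F) = (x : F) - algebraMap Fq F c * (g d : F) := by
            rw [hy]
            push_cast
            rw [Algebra.smul_def]
          have hevx : ev x = c • ev (g d) + ev y := by
            rw [hy, map_sub, map_smul]
            abel
          rw [← hyc] at hc
          by_cases hy0 : (y : F) = 0
          · rw [hevx, ZeroMemClass.coe_eq_zero.mp hy0, map_zero, add_zero]
            exact W.smul_mem c (hmemW d hdD)
          · obtain ⟨d', hd'v, _⟩ := hpole y hy0
            have hdd : d' < d := by
              rw [hdv, hd'v] at hc
              have := WithTop.coe_lt_coe.mp hc
              omega
            have hyW := IH d' (lt_of_lt_of_le hdd hdN) y hd'v.ge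
            rw [hevx]
            exact W.add_mem (W.smul_mem c (hmemW d hdD)) hyW
  have hall : ∀ x : ↥R, ev x ∈ W := by
    intro x
    by_cases hx0 : (x : F) = 0
    · rw [ZeroMemClass.coe_eq_zero.mp hx0, map_zero]
      exact W.zero_mem
    · obtain ⟨d, hdv, _⟩ := hpole x hx0
      exact main d x hdv.ge
  -- W = ⊤ via linear independence of characters
  have hWtop : W = ⊤ := by
    by_contra hWne
    obtain ⟨ψ, hψ0, hψ⟩ :=
      Submodule.exists_dual_map_eq_bot_of_lt_top (lt_top_iff_ne_top.mpr hWne) inferInstance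
    have hker2 : ∀ w ∈ W, ψ w = 0 := by
      intro w hw
      have hmem : ψ w ∈ W.map ψ := ⟨w, hw, rfl⟩
      rw [hψ] at hmem
      exact (Submodule.mem_bot Fq).mp hmem
    set c : Fin n → Fq := fun j => ψ (fun j' => if j = j' then 1 else 0) with hcdef
    have hpsiw : ∀ w : Fin n → Fq, ψ w = ∑ j, w j * c j := by
      intro w
      conv_lhs => rw [pi_eq_sum_univ w, map_sum]
      refine Finset.sum_congr rfl fun j _ => ?_
      rw [map_smul, smul_eq_mul]
    have hcomb : ∀ x : ↥R, ∑ j, c j * φ j x = 0 := by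
      intro x
      have h0 := hker2 (ev x) (hall x)
      rw [hpsiw] at h0
      rw [← h0]
      exact Finset.sum_congr rfl fun j _ => by rw [hev, mul_comm]
    have hli : LinearIndependent Fq fun j : Fin n => ((φ j : ↥R →* Fq) : ↥R → Fq) := by
      refine (linearIndependent_monoidHom ↥R Fq).comp (fun j => (φ j : ↥R →* Fq)) ?_
      intro a b hab
      exact hφ (AlgHom.ext fun x => DFunLike.congr_fun hab x)
    have hc0 : ∀ j, c j = 0 := by
      refine Fintype.linearIndependent_iff.mp hli c ?_
      funext x
      simpa [Finset.sum_apply] using hcomb x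
    refine hψ0 (LinearMap.ext fun w => ?_)
    rw [hpsiw w]
    simp [hc0]
  -- conclude
  have h2 : Module.finrank Fq (Fin n → Fq) ≤ T.card := by
    have h3 := finrank_span_finset_le_card (R := Fq) T
    rw [Set.finrank] at h3
    rw [← hW] at h3
    rw [hWtop, finrank_top] at h3
    exact h3
  have h3 : Module.finrank Fq (Fin n → Fq) = n := by
    rw [Module.finrank_fintype_fun_eq_card, Fintype.card_fin]
  have h4 : T.card ≤ (Λ \ U).ncard := by
    calc T.card ≤ hDfin.toFinset.card := Finset.card_image_le
    _ = (Λ \ U).ncard := (Set.ncard_eq_toFinset_card _ hDfin).symm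
  omega
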